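/- Let g be a real metric Lie algebra with orthogonal decomposition g = ⊕ⱼ₌₁^k gⱼ into irreducible factors, and suppose g has no non-zero abelian factor. Then every orthogonal bi-invariant complex structure J on g satisfies J(gⱼ) = gⱼ for each j, and the complex Lie algebras (gⱼ, J|_{gⱼ}) are precisely the irreducible factors of the complex metric Lie algebra (g,J). -/

import Mathlib

open scoped RealInnerProductSpace TensorProduct

/-- A metric Lie algebra: a real Lie algebra equipped with a positive definite inner product. -/
class MetricLieAlgebra (g : Type*) [LieRing g] [LieAlgebra ℝ g] [Inner ℝ g] : Prop where
  inner_add_left : ∀ x y z : g, ⟪x + y, z⟫ = ⟪x, z⟫ + ⟪y, z⟫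
  inner_smul_left : ∀ (r : ℝ) (x y : g), ⟪r • x, y⟫ = r * ⟪x, y⟫
  inner_symm : ∀ x y : g, ⟪x, y⟫ = ⟪y, x⟫
  inner_self_pos : ∀ x : g, x ≠ 0 → 0 < ⟪x, x⟫

variable {g : Type*} [LieRing g] [LieAlgebra ℝ g] [Inner ℝ g]

/-- An orthogonal factor: an ideal admitting a complementary ideal orthogonal to it. -/
def IsOrthogonalFactor (h : LieIdeal ℝ g) : Prop :=
  ∃ h' : LieIdeal ℝ g, (∀ x ∈ h, ∀ y ∈ h', ⟪x, y⟫ = 0) ∧ h ⊔ h' = ⊤ ∧ h ⊓ h' = ⊥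

/-- An orthogonal projection of a metric Lie algebra. -/
def IsOrthogonalProjection (p : g →ₗ[ℝ] g) : Prop :=
  (∀ x y : g, p ⁅x, y⁆ = ⁅p x, p y⁆) ∧ p ∘ₗ p = p ∧
  (∀ x y : g, p ⁅x, y⁆ = ⁅p x, y⁆) ∧ ∀ x y : g, ⟪p x, y⟫ = ⟪x, p y⟫

/-- An orthogonal bi-invariant complex structure. -/
def IsOrthBiinvCplxStruct (J : g →ₗ[ℝ] g) : Prop :=
  (∀ x : g, J (J x) = -x) ∧ (∀ x y : g, J ⁅x, y⁆ = ⁅J x, y⁆) ∧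
    ∀ x y : g, ⟪J x, J y⟫ = ⟪x, y⟫

/-- An irreducible orthogonal factor. -/
def IsIrreducibleFactor (h : LieIdeal ℝ g) : Prop :=
  IsOrthogonalFactor h ∧ h ≠ ⊥ ∧
    ∀ k : LieIdeal ℝ g, k ≤ h → IsOrthogonalFactor k → k = ⊥ ∨ k = h

/-- A complex factor of `(g,J)`: an orthogonal factor which is `J`-invariant. -/
def IsComplexFactor (J : g →ₗ[ℝ] g) (h : LieIdeal ℝ g) : Prop :=
  IsOrthogonalFactor h ∧ ∀ x ∈ h, J x ∈ h

/-- An irreducible complex factor of `(g,J)`. -/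
def IsComplexIrreducibleFactor (J : g →ₗ[ℝ] g) (h : LieIdeal ℝ g) : Prop :=
  IsComplexFactor J h ∧ h ≠ ⊥ ∧
    ∀ k : LieIdeal ℝ g, k ≤ h → IsComplexFactor J k → k = ⊥ ∨ k = h

namespace Stmt15Aux

set_option linter.unusedSectionVars false

variable [MetricLieAlgebra g]

lemma inn_add_left (x y z : g) : ⟪x + y, z⟫ = ⟪x, z⟫ + ⟪y, z⟫ := MetricLieAlgebra.inner_add_left x y z
lemma inn_smul_left (r : ℝ) (x y : g) : ⟪r • x, y⟫ = r * ⟪x, y⟫ := MetricLieAlgebra.inner_smul_left r x y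
lemma inn_symm (x y : g) : ⟪x, y⟫ = ⟪y, x⟫ := MetricLieAlgebra.inner_symm x y
lemma inn_zero_left (y : g) : ⟪(0 : g), y⟫ = 0 := by
  have h := inn_smul_left (0 : ℝ) (0 : g) y
  simpa using h
lemma inn_zero_right (x : g) : ⟪x, (0 : g)⟫ = 0 := by rw [inn_symm]; exact inn_zero_left x
lemma inn_add_right (x y z : g) : ⟪x, y + z⟫ = ⟪x, y⟫ + ⟪x, z⟫ := by
  rw [inn_symm, inn_add_left, inn_symm y x, inn_symm z x]
lemma inn_smul_right (r : ℝ) (x y : g) : ⟪x, r • y⟫ = r * ⟪x, y⟫ := by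
  rw [inn_symm, inn_smul_left, inn_symm]
lemma inn_neg_right (x y : g) : ⟪x, -y⟫ = -⟪x, y⟫ := by
  have h := inn_smul_right (-1 : ℝ) x y
  simpa using h
lemma inn_neg_left (x y : g) : ⟪-x, y⟫ = -⟪x, y⟫ := by rw [inn_symm, inn_neg_right, inn_symm]
lemma inn_sub_left (x y z : g) : ⟪x - y, z⟫ = ⟪x, z⟫ - ⟪y, z⟫ := by
  rw [sub_eq_add_neg, inn_add_left, inn_neg_left, sub_eq_add_neg]
lemma inn_sub_right (x y z : g) : ⟪x, y - z⟫ = ⟪x, y⟫ - ⟪x, z⟫ := by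
  rw [inn_symm, inn_sub_left, inn_symm y x, inn_symm z x]
lemma inn_sum_right {ι : Type*} (s : Finset ι) (f : ι → g) (x : g) :
    ⟪x, ∑ i ∈ s, f i⟫ = ∑ i ∈ s, ⟪x, f i⟫ := by
  classical
  induction s using Finset.induction_on with
  | empty => simp [inn_zero_right]
  | insert _ _ hns ih => rename_i a s'; rw [Finset.sum_insert hns, Finset.sum_insert hns, inn_add_right, ih]
lemma inn_sum_left {ι : Type*} (s : Finset ι) (f : ι → g) (x : g) :
    ⟪∑ i ∈ s, f i, x⟫ = ∑ i ∈ s, ⟪f i, x⟫ := by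
  rw [inn_symm, inn_sum_right]; exact Finset.sum_congr rfl fun i _ => inn_symm x (f i)
lemma eq_zero_of_inn_self {x : g} (h : ⟪x, x⟫ = 0) : x = 0 := by
  by_contra hx
  exact absurd h (ne_of_gt (MetricLieAlgebra.inner_self_pos x hx))

/-- Key vanishing lemma: a linear map killing all brackets kills all central elements, since
the center is contained in the derived ideal. -/
lemma S_central (hZ : ∀ x : g, (∀ y : g, ⁅x, y⁆ = 0) →
      x ∈ ⁅(⊤ : LieIdeal ℝ g), (⊤ : LieIdeal ℝ g)⁆)
    (S : g →ₗ[ℝ] g) (hSb : ∀ a b : g, S ⁅a, b⁆ = 0)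
    (v : g) (hv : ∀ y : g, ⁅v, y⁆ = 0) : S v = 0 := by
  have hmem := hZ v hv
  rw [← LieSubmodule.mem_toSubmodule, LieSubmodule.lieIdeal_oper_eq_linear_span'] at hmem
  refine Submodule.span_induction ?_ (map_zero S) ?_ ?_ hmem
  · rintro m ⟨a, -, b, -, rfl⟩ ; exact hSb a b
  · intro a b _ _ ha hb; rw [map_add, ha, hb, add_zero]
  · intro r a _ ha; rw [map_smul, ha, smul_zero]

lemma lie_sum' {ι : Type*} (x : g) (s : Finset ι) (f : ι → g) :
    ⁅x, ∑ i ∈ s, f i⁆ = ∑ i ∈ s, ⁅x, f i⁆ :=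
  map_sum (LieAlgebra.ad ℝ g x) f s

lemma sum_lie' {ι : Type*} (x : g) (s : Finset ι) (f : ι → g) :
    ⁅∑ i ∈ s, f i, x⁆ = ∑ i ∈ s, ⁅f i, x⁆ := by
  classical
  induction s using Finset.induction_on with
  | empty => simp
  | insert _ _ hns ih => rename_i a s'; rw [Finset.sum_insert hns, Finset.sum_insert hns, add_lie, ih]

lemma Jskew {J : g →ₗ[ℝ] g} (hJ : IsOrthBiinvCplxStruct J) (c d : g) :
    ⟪J c, d⟫ = -⟪c, J d⟫ := by
  have h1 : d = -(J (J d)) := by rw [hJ.1, neg_neg]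
  calc ⟪J c, d⟫ = ⟪J c, -(J (J d))⟫ := by rw [← h1]
    _ = -⟪J c, J (J d)⟫ := inn_neg_right _ _
    _ = -⟪c, J d⟫ := by rw [hJ.2.2]

lemma lie_mem_left' (I : LieIdeal ℝ g) {x : g} (y : g) (hx : x ∈ I) : ⁅x, y⁆ ∈ I := by
  rw [← lie_skew]
  exact neg_mem (I.lie_mem hx)

section Proj

variable {k : ℕ} (G : Fin k → LieIdeal ℝ g)

/-- Existence of the projections associated to an orthogonal decomposition. -/
lemma exists_proj
    (horth : ∀ i j, i ≠ j → ∀ x ∈ G i, ∀ y ∈ G j, ⟪x, y⟫ = 0)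
    (hsup : (⨆ j, G j) = ⊤) :
    ∃ P : Fin k → (g →ₗ[ℝ] g),
      (∀ i x, P i x ∈ G i) ∧ (∀ x, ∑ i, P i x = x) ∧
      (∀ i x, x ∈ G i → P i x = x) ∧ (∀ i j x, i ≠ j → x ∈ G j → P i x = 0) := by
  classical
  let Φ : (∀ j, G j) →ₗ[ℝ] g :=
    { toFun := fun f => ∑ j, (f j : g)
      map_add' := by intro f h; simp [Finset.sum_add_distrib]
      map_smul' := by intro r f; simp [Finset.smul_sum] }
  have hΦsingle : ∀ (j : Fin k) (v : G j), Φ (Pi.single j v) = (v : g) := by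
    intro j v
    show (∑ m, ((Pi.single j v : ∀ j, G j) m : g)) = (v : g)
    rw [Finset.sum_eq_single j]
    · rw [Pi.single_eq_same]
    · intro m _ hm; rw [Pi.single_eq_of_ne hm]; rfl
    · intro hm; exact absurd (Finset.mem_univ j) hm
  have hinj : Function.Injective Φ := by
    intro f h hfh
    have key : ∀ f₀ : (∀ j, G j), Φ f₀ = 0 → f₀ = 0 := by
      intro f₀ h0
      funext j
      have h1 : ⟪(f₀ j : g), Φ f₀⟫ = ⟪(f₀ j : g), (f₀ j : g)⟫ := by
        show ⟪(f₀ j : g), ∑ m, (f₀ m : g)⟫ = _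
        rw [inn_sum_right, Finset.sum_eq_single j]
        · intro m _ hm; exact horth j m (Ne.symm hm) _ (f₀ j).2 _ (f₀ m).2
        · intro hm; exact absurd (Finset.mem_univ j) hm
      rw [h0, inn_zero_right] at h1
      exact Subtype.ext (eq_zero_of_inn_self h1.symm)
    have : f - h = 0 := key _ (by rw [map_sub, hfh, sub_self])
    exact sub_eq_zero.mp this
  have hsurj : Function.Surjective Φ := by
    intro x
    have hx : x ∈ (⨆ j, G j) := by rw [hsup]; trivial
    rw [← LieSubmodule.mem_toSubmodule, LieSubmodule.iSup_toSubmodule] at hx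
    have hle : (⨆ j, ((G j : LieSubmodule ℝ g g) : Submodule ℝ g)) ≤ LinearMap.range Φ :=
      iSup_le fun j y hy => ⟨Pi.single j ⟨y, hy⟩, hΦsingle j ⟨y, hy⟩⟩
    exact hle hx
  let e := LinearEquiv.ofBijective Φ ⟨hinj, hsurj⟩
  let P : Fin k → (g →ₗ[ℝ] g) := fun i =>
    { toFun := fun x => (e.symm x i : g)
      map_add' := by intro x y; show ((e.symm (x+y)) i : g) = _; rw [map_add]; rfl
      map_smul' := by intro r x; show ((e.symm (r • x)) i : g) = _; rw [map_smul]; rfl }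
  have hPdef : ∀ i x, P i x = (e.symm x i : g) := fun i x => rfl
  have hsum : ∀ x, ∑ i, P i x = x := by
    intro x
    have : Φ (e.symm x) = x := e.apply_symm_apply x
    exact this
  have hsingle : ∀ (j : Fin k) (x : g) (hx : x ∈ G j), e.symm x = Pi.single j ⟨x, hx⟩ := by
    intro j x hx
    apply e.injective
    rw [e.apply_symm_apply]
    exact (hΦsingle j ⟨x, hx⟩).symm
  refine ⟨P, fun i x => (e.symm x i).2, hsum, ?_, ?_⟩
  · intro i x hx
    rw [hPdef, hsingle i x hx, Pi.single_eq_same]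
  · intro i j x hij hx
    rw [hPdef, hsingle j x hx, Pi.single_eq_of_ne hij]
    rfl

variable {G}
variable {P : Fin k → (g →ₗ[ℝ] g)}
variable (horth : ∀ i j, i ≠ j → ∀ x ∈ G i, ∀ y ∈ G j, ⟪x, y⟫ = 0)
variable (hmem : ∀ i x, P i x ∈ G i) (hsum : ∀ x, ∑ i, P i x = x)
variable (hid : ∀ i x, x ∈ G i → P i x = x) (hzero : ∀ i j x, i ≠ j → x ∈ G j → P i x = 0)

include horth in
lemma cross_lie {i j : Fin k} (hij : i ≠ j) {x y : g} (hx : x ∈ G i) (hy : y ∈ G j) :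
    ⁅x, y⁆ = 0 :=
  eq_zero_of_inn_self (horth i j hij _ (lie_mem_left' (G i) y hx) _ ((G j).lie_mem hy))

include hmem hsum hid hzero in
lemma proj_lie (i : Fin k) (x y : g) : P i ⁅x, y⁆ = ⁅P i x, y⁆ := by
  conv_lhs => rw [← hsum x, sum_lie', map_sum]
  rw [Finset.sum_eq_single i]
  · exact hid i _ (lie_mem_left' (G i) y (hmem i x))
  · intro m _ hm; exact hzero i m _ (Ne.symm hm) (lie_mem_left' (G m) y (hmem m x))
  · intro hm; exact absurd (Finset.mem_univ i) hm

include horth hmem hsum in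
lemma proj_adj (i : Fin k) (x y : g) : ⟪P i x, y⟫ = ⟪x, P i y⟫ := by
  have key : ∀ a b : g, ⟪P i a, b⟫ = ⟪P i a, P i b⟫ := by
    intro a b
    conv_lhs => rw [← hsum b]
    rw [inn_sum_right, Finset.sum_eq_single i]
    · intro m _ hm; exact horth i m (Ne.symm hm) _ (hmem i a) _ (hmem m b)
    · intro hm; exact absurd (Finset.mem_univ i) hm
  have key2 : ⟪x, P i y⟫ = ⟪P i x, P i y⟫ := by
    conv_lhs => rw [← hsum x]
    rw [inn_sum_left, Finset.sum_eq_single i]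
    · intro m _ hm; exact horth m i hm _ (hmem m x) _ (hmem i y)
    · intro hm; exact absurd (Finset.mem_univ i) hm
  rw [key, key2]

variable {J : g →ₗ[ℝ] g}

include horth hmem hsum hid hzero in
lemma cent (hJ : IsOrthBiinvCplxStruct J) {i j : Fin k} (hij : i ≠ j) {x : g} (hx : x ∈ G j)
    (y : g) : ⁅P i (J x), y⁆ = 0 := by
  conv_lhs => rw [← hsum y, lie_sum']
  refine Finset.sum_eq_zero fun n _ => ?_
  by_cases hn : n = i
  · subst hn
    rw [← proj_lie hmem hsum hid hzero, ← hJ.2.1,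
      cross_lie horth (Ne.symm hij) hx (hmem n y), map_zero, map_zero]
  · exact cross_lie horth (fun h' => hn h'.symm) (hmem i (J x)) (hmem n y)

include horth hmem hsum hid hzero in
lemma Jinv (hZ : ∀ x : g, (∀ y : g, ⁅x, y⁆ = 0) →
      x ∈ ⁅(⊤ : LieIdeal ℝ g), (⊤ : LieIdeal ℝ g)⁆)
    (hJ : IsOrthBiinvCplxStruct J) (j : Fin k) (x : g) (hx : x ∈ G j) : J x ∈ G j := by
  have hz : ∀ i, i ≠ j → P i (J x) = 0 := by
    intro i hij
    set v := P i (J x) with hv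
    have hvmem : v ∈ G i := hmem i (J x)
    have hvc : ∀ y : g, ⁅v, y⁆ = 0 := cent horth hmem hsum hid hzero hJ hij hx
    set S : g →ₗ[ℝ] g := -((P j).comp (J.comp (P i))) with hS
    have hSb : ∀ a b : g, S ⁅a, b⁆ = 0 := by
      intro a b
      show -(P j (J (P i ⁅a, b⁆))) = 0
      rw [proj_lie hmem hsum hid hzero, hJ.2.1, proj_lie hmem hsum hid hzero,
        cent horth hmem hsum hid hzero hJ (Ne.symm hij) (hmem i a) b, neg_zero]
    have hSv : S v = 0 := S_central hZ S hSb v hvc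
    have hSv' : S v = -(P j (J v)) := by
      show -(P j (J (P i v))) = _
      rw [hid i v hvmem]
    have hvv : ⟪v, v⟫ = ⟪x, S v⟫ := by
      calc ⟪v, v⟫ = ⟪J x, P i v⟫ := proj_adj horth hmem hsum i (J x) v
        _ = ⟪J x, v⟫ := by rw [hid i v hvmem]
        _ = -⟪x, J v⟫ := Jskew hJ x v
        _ = -⟪P j x, J v⟫ := by rw [hid j x hx]
        _ = -⟪x, P j (J v)⟫ := by rw [proj_adj horth hmem hsum]
        _ = ⟪x, -(P j (J v))⟫ := (inn_neg_right _ _).symm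
        _ = ⟪x, S v⟫ := by rw [← hSv']
    rw [hSv, inn_zero_right] at hvv
    exact eq_zero_of_inn_self hvv
  have h1 := hsum (J x)
  rw [Finset.sum_eq_single j (fun m _ hm => hz m hm)
    (fun hm => absurd (Finset.mem_univ j) hm)] at h1
  rw [← h1]
  exact hmem j (J x)

end Proj
end Stmt15Aux

/-- If `g` (with no non-zero abelian factor) decomposes orthogonally into irreducible
factors `gⱼ`, then any orthogonal bi-invariant complex structure `J` preserves each
`gⱼ`, and the `(gⱼ, J|_{gⱼ})` are exactly the irreducible complex factors of `(g,J)`. -/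
theorem stmt15 (g : Type*) [LieRing g] [LieAlgebra ℝ g] [Inner ℝ g]
    [MetricLieAlgebra g] [Module.Finite ℝ g]
    (hZ : ∀ x : g, (∀ y : g, ⁅x, y⁆ = 0) →
      x ∈ ⁅(⊤ : LieIdeal ℝ g), (⊤ : LieIdeal ℝ g)⁆)
    (k : ℕ) (G : Fin k → LieIdeal ℝ g)
    (hirr : ∀ j, IsIrreducibleFactor (G j))
    (horth : ∀ i j, i ≠ j → ∀ x ∈ G i, ∀ y ∈ G j, ⟪x, y⟫ = 0)
    (hsup : (⨆ j, G j) = ⊤)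
    (J : g →ₗ[ℝ] g) (hJ : IsOrthBiinvCplxStruct J) :
    (∀ j, ∀ x ∈ G j, J x ∈ G j) ∧
    (∀ j, IsComplexIrreducibleFactor J (G j)) ∧
    (∀ h : LieIdeal ℝ g, IsComplexIrreducibleFactor J h → ∃ j, h = G j) := by
  classical
  open Stmt15Aux in
  obtain ⟨P, hmem, hsum, hid, hzero⟩ := Stmt15Aux.exists_proj G horth hsup
  have part1 : ∀ j, ∀ x ∈ G j, J x ∈ G j := fun j x hx =>
    Stmt15Aux.Jinv horth hmem hsum hid hzero hZ hJ j x hx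
  have part2 : ∀ j, IsComplexIrreducibleFactor J (G j) := by
    intro j
    exact ⟨⟨(hirr j).1, part1 j⟩, (hirr j).2.1, fun k' hk' hkc => (hirr j).2.2 k' hk' hkc.1⟩
  refine ⟨part1, part2, ?_⟩
  intro h hcif
  obtain ⟨⟨⟨h', horthhh', hsup', hinf'⟩, hJh⟩, hne, hmin⟩ := hcif
  -- the pair decomposition g = h ⊕ h'
  set H : Fin 2 → LieIdeal ℝ g := ![h, h'] with hH
  have hH0 : H 0 = h := rfl
  have hH1 : H 1 = h' := rfl
  have horthH : ∀ i j, i ≠ j → ∀ x ∈ H i, ∀ y ∈ H j, ⟪x, y⟫ = 0 := by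
    intro i j hij x hx y hy
    fin_cases i <;> fin_cases j
    · exact absurd rfl hij
    · exact horthhh' x hx y hy
    · rw [Stmt15Aux.inn_symm]; exact horthhh' y hy x hx
    · exact absurd rfl hij
  have hsupH : (⨆ m, H m) = ⊤ := by
    apply le_antisymm le_top
    rw [← hsup']
    exact sup_le (le_iSup H 0) (le_iSup H 1)
  obtain ⟨Q, hQmem, hQsum, hQid, hQzero⟩ := Stmt15Aux.exists_proj H horthH hsupH
  have hQ0mem : ∀ x : g, Q 0 x ∈ h := fun x => hQmem 0 x
  have hQ1mem : ∀ x : g, Q 1 x ∈ h' := fun x => hQmem 1 x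
  have hQsum2 : ∀ x : g, Q 0 x + Q 1 x = x := by
    intro x
    have h2 := hQsum x
    rwa [Fin.sum_univ_two] at h2
  -- a nonzero element of h and a factor it meets
  have hex : ∃ x0 ∈ h, x0 ≠ 0 := by
    by_contra hc
    push_neg at hc
    exact hne ((LieSubmodule.eq_bot_iff h).mpr fun m hm => hc m hm)
  obtain ⟨x0, hx0h, hx0⟩ := hex
  have hexj : ∃ j, P j x0 ≠ 0 := by
    by_contra hc
    push_neg at hc
    apply hx0
    rw [← hsum x0]
    exact Finset.sum_eq_zero fun m _ => hc m
  obtain ⟨j, hPj⟩ := hexj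
  -- centrality of the commutator of the two projections
  have hCa : ∀ a ∈ h, ∀ y : g, ⁅Q 0 (P j a) - P j a, y⁆ = 0 := by
    intro a ha y
    have hCa' : Q 0 (P j a) - P j a = -(Q 1 (P j a)) := by
      have h4 : (Q 0 (P j a) - P j a) + Q 1 (P j a) = 0 := by
        rw [sub_add_eq_add_sub, hQsum2 (P j a), sub_self]
      exact eq_neg_of_add_eq_zero_left h4
    have hs0 : ⁅Q 1 (P j a), Q 0 y⁆ = 0 :=
      Stmt15Aux.cross_lie (G := H) horthH (i := 1) (j := 0) (by decide)
        (show Q 1 (P j a) ∈ H 1 from hQ1mem _) (show Q 0 y ∈ H 0 from hQ0mem y)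
    have hs1 : ⁅Q 1 (P j a), Q 1 y⁆ = 0 := by
      rw [← Stmt15Aux.proj_lie hQmem hQsum hQid hQzero,
        ← Stmt15Aux.proj_lie hmem hsum hid hzero,
        Stmt15Aux.cross_lie (G := H) horthH (i := 0) (j := 1) (by decide)
          (show a ∈ H 0 from ha) (show Q 1 y ∈ H 1 from hQ1mem y), map_zero, map_zero]
    rw [hCa', neg_lie]
    conv_lhs => rw [← hQsum2 y]
    rw [lie_add, hs0, hs1, add_zero, neg_zero]
  have hCb : ∀ b ∈ h', ∀ y : g, ⁅Q 0 (P j b), y⁆ = 0 := by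
    intro b hb y
    have hs0 : ⁅Q 0 (P j b), Q 0 y⁆ = 0 := by
      rw [← Stmt15Aux.proj_lie hQmem hQsum hQid hQzero,
        ← Stmt15Aux.proj_lie hmem hsum hid hzero,
        Stmt15Aux.cross_lie (G := H) horthH (i := 1) (j := 0) (by decide)
          (show b ∈ H 1 from hb) (show Q 0 y ∈ H 0 from hQ0mem y), map_zero, map_zero]
    have hs1 : ⁅Q 0 (P j b), Q 1 y⁆ = 0 :=
      Stmt15Aux.cross_lie (G := H) horthH (i := 0) (j := 1) (by decide)
        (show Q 0 (P j b) ∈ H 0 from hQ0mem _) (show Q 1 y ∈ H 1 from hQ1mem y)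
    conv_lhs => rw [← hQsum2 y]
    rw [lie_add, hs0, hs1, add_zero]
  have hCcent : ∀ x y : g, ⁅Q 0 (P j x) - P j (Q 0 x), y⁆ = 0 := by
    intro x y
    have hde : Q 0 (P j x) - P j (Q 0 x)
        = (Q 0 (P j (Q 0 x)) - P j (Q 0 x)) + Q 0 (P j (Q 1 x)) := by
      have h5 : P j x = P j (Q 0 x) + P j (Q 1 x) := by rw [← map_add, hQsum2 x]
      rw [h5, map_add]
      abel
    rw [hde, add_lie, hCa (Q 0 x) (hQ0mem x) y, hCb (Q 1 x) (hQ1mem x) y, add_zero]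
  -- the commutator as a linear map
  set Cm : g →ₗ[ℝ] g := ((Q 0).comp (P j)) - ((P j).comp (Q 0)) with hCm
  have hCapp : ∀ x : g, Cm x = Q 0 (P j x) - P j (Q 0 x) := fun x => rfl
  have hSb : ∀ a b : g, (-Cm) ⁅a, b⁆ = 0 := by
    intro a b
    show -(Cm ⁅a, b⁆) = 0
    rw [hCapp, Stmt15Aux.proj_lie hmem hsum hid hzero,
      Stmt15Aux.proj_lie hQmem hQsum hQid hQzero,
      Stmt15Aux.proj_lie hQmem hQsum hQid hQzero,
      Stmt15Aux.proj_lie hmem hsum hid hzero, ← sub_lie, hCcent a b, neg_zero]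
  have hC0 : ∀ x : g, Cm x = 0 := by
    intro x
    have hcent : ∀ y : g, ⁅Cm x, y⁆ = 0 := by
      intro y; rw [hCapp]; exact hCcent x y
    have hSv : (-Cm) (Cm x) = 0 := Stmt15Aux.S_central hZ (-Cm) hSb (Cm x) hcent
    have t1 : ⟪Q 0 (P j x), x⟫ = ⟪x, P j (Q 0 x)⟫ := by
      rw [Stmt15Aux.proj_adj horthH hQmem hQsum, Stmt15Aux.proj_adj horth hmem hsum,
        Stmt15Aux.inn_symm]
    have hadj : ⟪Cm x, Cm x⟫ = ⟪x, (-Cm) (Cm x)⟫ := by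
      have t2 : ∀ a b : g, ⟪Cm a, b⟫ = -⟪a, Cm b⟫ := by
        intro a b
        rw [hCapp, hCapp, Stmt15Aux.inn_sub_left, Stmt15Aux.inn_sub_right]
        rw [Stmt15Aux.proj_adj horthH hQmem hQsum, Stmt15Aux.proj_adj horth hmem hsum]
        rw [Stmt15Aux.proj_adj horth hmem hsum (x := Q 0 a), Stmt15Aux.proj_adj horthH hQmem hQsum (x := a)]
        ring
      rw [t2]
      show _ = ⟪x, -(Cm (Cm x))⟫
      rw [Stmt15Aux.inn_neg_right]
    rw [hSv, Stmt15Aux.inn_zero_right] at hadj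
    exact Stmt15Aux.eq_zero_of_inn_self hadj
  have hcomm : ∀ x : g, Q 0 (P j x) = P j (Q 0 x) := by
    intro x
    have := hC0 x
    rw [hCapp] at this
    exact sub_eq_zero.mp this
  have hph : ∀ x ∈ h, P j x ∈ h := by
    intro x hx
    have he : P j x = Q 0 (P j x) := by rw [hcomm x, hQid 0 x hx]
    rw [he]
    exact hQ0mem _
  -- h ⊓ G j is a nonzero orthogonal factor inside G j
  set w : LieIdeal ℝ g := h' ⊔ ⨆ m : {m : Fin k // m ≠ j}, G m.1 with hw
  have horthw : ∀ x ∈ h ⊓ G j, ∀ y ∈ w, ⟪x, y⟫ = 0 := by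
    intro x hx y hy
    obtain ⟨hxh, hxG⟩ := (LieSubmodule.mem_inf h (G j) x).mp hx
    let N : Submodule ℝ g :=
      { carrier := {z : g | ⟪x, z⟫ = 0}
        add_mem' := by
          intro a b ha hb
          show ⟪x, a + b⟫ = 0
          rw [Stmt15Aux.inn_add_right, ha, hb, add_zero]
        zero_mem' := Stmt15Aux.inn_zero_right x
        smul_mem' := by
          intro c a ha
          show ⟪x, c • a⟫ = 0
          rw [Stmt15Aux.inn_smul_right, ha, mul_zero] }
    suffices hle : LieSubmodule.toSubmodule
        ((h' ⊔ ⨆ m : {m : Fin k // m ≠ j}, G m.1 : LieSubmodule ℝ g g)) ≤ N by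
      exact hle ((LieSubmodule.mem_toSubmodule _).mpr (hw ▸ hy))
    rw [LieSubmodule.sup_toSubmodule, LieSubmodule.iSup_toSubmodule]
    apply sup_le
    · intro z hz
      exact horthhh' x hxh z ((LieSubmodule.mem_toSubmodule _).mp hz)
    · refine iSup_le fun m => ?_
      intro z hz
      exact horth j m.1 (Ne.symm m.2) x hxG z ((LieSubmodule.mem_toSubmodule _).mp hz)
  have hsupw : (h ⊓ G j) ⊔ w = ⊤ := by
    rw [eq_top_iff]
    intro x _
    rw [LieSubmodule.mem_sup]
    refine ⟨Q 0 (P j x), ?_, x - Q 0 (P j x), ?_, by abel⟩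
    · exact (LieSubmodule.mem_inf _ _ _).mpr ⟨hQ0mem _, by rw [hcomm x]; exact hmem j _⟩
    · have hxe : x - Q 0 (P j x) = (∑ m ∈ Finset.univ.erase j, P m x) + Q 1 (P j x) := by
        have e1 : ∑ m ∈ Finset.univ.erase j, P m x = x - P j x := by
          have h6 := Finset.sum_erase_add Finset.univ (fun m => P m x) (Finset.mem_univ j)
          rw [hsum x] at h6
          exact eq_sub_of_add_eq h6
        have e2 : Q 1 (P j x) = P j x - Q 0 (P j x) := eq_sub_of_add_eq' (hQsum2 (P j x))
        rw [e1, e2]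
        abel
      rw [hxe]
      refine add_mem ?_ ?_
      · refine sum_mem fun m hm => ?_
        have hmj : m ≠ j := (Finset.mem_erase.mp hm).1
        have hGw : G m ≤ w :=
          le_trans (le_iSup (fun m : {m : Fin k // m ≠ j} => G m.1) ⟨m, hmj⟩) le_sup_right
        exact hGw (hmem m x)
      · exact (le_sup_left : h' ≤ w) (hQ1mem _)
  have hinfw : (h ⊓ G j) ⊓ w = ⊥ := by
    rw [LieSubmodule.eq_bot_iff]
    intro m hm
    obtain ⟨hm1, hm2⟩ := (LieSubmodule.mem_inf _ _ _).mp hm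
    exact Stmt15Aux.eq_zero_of_inn_self (horthw m hm1 m hm2)
  have hof : IsOrthogonalFactor (h ⊓ G j) := ⟨w, horthw, hsupw, hinfw⟩
  have hk0ne : (h ⊓ G j) ≠ ⊥ := by
    intro hb
    rw [LieSubmodule.eq_bot_iff] at hb
    exact hPj (hb (P j x0) ((LieSubmodule.mem_inf _ _ _).mpr ⟨hph x0 hx0h, hmem j x0⟩))
  rcases (hirr j).2.2 (h ⊓ G j) inf_le_right hof with hbot | heq
  · exact absurd hbot hk0ne
  · have hGh : G j ≤ h := heq ▸ inf_le_left
    rcases hmin (G j) hGh (part2 j).1 with hb | he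
    · exact absurd hb (hirr j).2.1
    · exact ⟨j, he.symm⟩
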